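/- Let k ∈ ℕ and g_b be the L²((0,∞))-normalization of t^{k/2}e^{−bt} for b > 0. Then for all b, b' > 0: (b−b')²/(8·max(b,b')²) ≤ (1/2)∫₀^∞ (g_b − g_{b'})² dt ≤ (k+1)(b−b')²/(8·min(b,b')²). -/

import Mathlib

open MeasureTheory Real

/-- The unnormalized gamma-type function `t ^ (k/2) * exp (-b*t)`. -/
noncomputable def gammaFun (k : ℕ) (b : ℝ) (t : ℝ) : ℝ :=
  t ^ ((k : ℝ)/2) * Real.exp (-b * t)

/-- Its `L²((0,∞))`-normalization. -/
noncomputable def gNorm (k : ℕ) (b : ℝ) (t : ℝ) : ℝ :=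
  gammaFun k b t / Real.sqrt (∫ u in Set.Ioi (0:ℝ), (gammaFun k b u) ^ 2)

lemma gammaFun_mul_eq (k : ℕ) (a a' : ℝ) {t : ℝ} (ht : 0 < t) :
    gammaFun k a t * gammaFun k a' t = t ^ (((k:ℝ) + 1) - 1) * Real.exp (-((a + a') * t)) := by
  unfold gammaFun
  rw [show -((a + a') * t) = -a * t + -a' * t by ring, Real.exp_add,
    show ((k:ℝ) + 1) - 1 = (k:ℝ)/2 + (k:ℝ)/2 by ring, Real.rpow_add ht]
  ring

lemma integrable_gammaFun_mul (k : ℕ) {a a' : ℝ} (ha : 0 < a) (ha' : 0 < a') :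
    IntegrableOn (fun t => gammaFun k a t * gammaFun k a' t) (Set.Ioi (0:ℝ)) := by
  have hk : (-1:ℝ) < (k:ℝ) := lt_of_lt_of_le neg_one_lt_zero (Nat.cast_nonneg k)
  have base : IntegrableOn (fun t : ℝ => t ^ ((k:ℝ)) * Real.exp (-(a + a') * t ^ (1:ℝ)))
      (Set.Ioi (0:ℝ)) := integrableOn_rpow_mul_exp_neg_mul_rpow hk zero_lt_one (by positivity)
  refine base.congr_fun (fun t ht => ?_) measurableSet_Ioi
  dsimp only
  rw [Real.rpow_one, gammaFun_mul_eq k a a' ht]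
  congr 2
  · ring
  · ring

lemma integral_gammaFun_mul (k : ℕ) {a a' : ℝ} (ha : 0 < a) (ha' : 0 < a') :
    ∫ t in Set.Ioi (0:ℝ), gammaFun k a t * gammaFun k a' t
      = Real.Gamma ((k:ℝ) + 1) / (a + a') ^ (k + 1) := by
  rw [setIntegral_congr_fun measurableSet_Ioi (fun t ht => gammaFun_mul_eq k a a' ht),
    integral_rpow_mul_exp_neg_mul_Ioi (by positivity) (by positivity)]
  have : ((k:ℝ) + 1) = ((k + 1 : ℕ) : ℝ) := by push_cast; ring
  rw [this, Real.rpow_natCast]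
  rw [one_div, inv_pow]
  ring

lemma one_sub_pow_le_nat_mul {z : ℝ} (h0 : 0 ≤ z) (h1 : z ≤ 1) (n : ℕ) :
    1 - z ^ n ≤ (n : ℝ) * (1 - z) := by
  induction n with
  | zero => simp
  | succ n ih =>
    have h2 := mul_le_mul_of_nonneg_left ih h0
    have hzn : z ^ n ≤ 1 := pow_le_one₀ h0 h1
    have h3 : (0:ℝ) ≤ (n : ℝ) * (1 - z) := le_trans (by linarith) ih
    have hp : z ^ (n + 1) = z * z ^ n := by ring
    have h4 : (0:ℝ) ≤ (1 - z) * ((n:ℝ) * (1 - z)) := mul_nonneg (by linarith) h3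
    push_cast
    nlinarith [h2, hp, h4]

lemma bounds_aux {b b' : ℝ} (hb : 0 < b) (hb' : 0 < b') (k : ℕ) :
    (b - b') ^ 2 / (8 * (max b b') ^ 2) ≤ 1 - (Real.sqrt (4*b*b') / (b + b')) ^ (k+1) ∧
    1 - (Real.sqrt (4*b*b') / (b + b')) ^ (k+1) ≤ ((k:ℝ) + 1) * (b - b') ^ 2 / (8 * (min b b') ^ 2) := by
  set s := Real.sqrt (4*b*b') with hsdef
  have hs : 0 < s := Real.sqrt_pos.mpr (by positivity)
  set z := s / (b + b') with hzdef
  have hz0 : 0 ≤ z := by positivity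
  have hz1 : z ≤ 1 := by
    rw [hzdef, div_le_one (by positivity)]
    have h := Real.sqrt_le_sqrt (show 4*b*b' ≤ (b+b')^2 by nlinarith [sq_nonneg (b - b')])
    rwa [Real.sqrt_sq (by positivity)] at h
  set x := Real.sqrt b with hxdef
  set y := Real.sqrt b' with hydef
  have hx : 0 < x := Real.sqrt_pos.mpr hb
  have hy : 0 < y := Real.sqrt_pos.mpr hb'
  have hxb : x ^ 2 = b := Real.sq_sqrt hb.le
  have hyb : y ^ 2 = b' := Real.sq_sqrt hb'.le
  have hsxy : s = 2 * x * y := by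
    rw [hsdef, show 4*b*b' = (2*x*y)^2 by rw [← hxb, ← hyb]; ring,
      Real.sqrt_sq (by positivity)]
  have honesub : 1 - z = (x - y)^2 / (b + b') := by
    rw [hzdef, hsxy, show b + b' = x^2 + y^2 by rw [hxb, hyb]]
    have hxy2 : (0:ℝ) < x^2 + y^2 := by positivity
    field_simp
    ring
  have hzk_le : z ^ (k+1) ≤ z := pow_le_of_le_one hz0 hz1 (Nat.succ_ne_zero k)
  have hbb' : b - b' = (x - y) * (x + y) := by rw [← hxb, ← hyb]; ring
  constructor
  · have hM : 0 < max b b' := lt_max_of_lt_left hb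
    have hxM : x ^ 2 ≤ max b b' := by rw [hxb]; exact le_max_left _ _
    have hyM : y ^ 2 ≤ max b b' := by rw [hyb]; exact le_max_right _ _
    have step1 : (b - b') ^ 2 / (8 * (max b b') ^ 2) ≤ (x - y)^2 / (b + b') := by
      rw [div_le_div_iff₀ (by positivity) (by positivity), hbb']
      have h4 : (x+y)^2 ≤ 4 * max b b' := by nlinarith [sq_nonneg (x-y)]
      have h5 : b + b' ≤ 2 * max b b' := by
        have h51 := le_max_left b b'; have h52 := le_max_right b b'; linarith
      have h6 : (x+y)^2 * (b+b') ≤ (4 * max b b') * (2 * max b b') :=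
        mul_le_mul h4 h5 (by positivity) (by positivity)
      nlinarith [mul_le_mul_of_nonneg_left h6 (sq_nonneg (x - y))]
    calc (b - b') ^ 2 / (8 * (max b b') ^ 2) ≤ (x - y)^2 / (b + b') := step1
      _ = 1 - z := honesub.symm
      _ ≤ 1 - z ^ (k+1) := by linarith
  · have hkz : 1 - z ^ (k+1) ≤ ((k:ℝ) + 1) * (1 - z) := by
      have h := one_sub_pow_le_nat_mul hz0 hz1 (k+1)
      push_cast at h
      linarith
    have hm : 0 < min b b' := lt_min hb hb'
    have hxm : min b b' ≤ x ^ 2 := by rw [hxb]; exact min_le_left _ _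
    have hym : min b b' ≤ y ^ 2 := by rw [hyb]; exact min_le_right _ _
    have step2 : (x - y)^2 / (b + b') ≤ (b - b') ^ 2 / (8 * (min b b') ^ 2) := by
      rw [div_le_div_iff₀ (by positivity) (by positivity), hbb']
      have hxy : min b b' ≤ x * y := by nlinarith [mul_pos hx hy]
      have h4 : 4 * min b b' ≤ (x+y)^2 := by nlinarith
      have h5 : 2 * min b b' ≤ b + b' := by
        have h51 := min_le_left b b'; have h52 := min_le_right b b'; linarith
      have h6 : (4 * min b b') * (2 * min b b') ≤ (x+y)^2 * (b+b') :=
        mul_le_mul h4 h5 (by positivity) (by positivity)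
      nlinarith [mul_le_mul_of_nonneg_left h6 (sq_nonneg (x - y))]
    calc 1 - z ^ (k+1) ≤ ((k:ℝ) + 1) * (1 - z) := hkz
      _ = ((k:ℝ) + 1) * ((x - y)^2 / (b + b')) := by rw [honesub]
      _ ≤ ((k:ℝ) + 1) * ((b - b') ^ 2 / (8 * (min b b') ^ 2)) :=
          mul_le_mul_of_nonneg_left step2 (by positivity)
      _ = ((k:ℝ) + 1) * (b - b') ^ 2 / (8 * (min b b') ^ 2) := by ring

theorem stmt_3 (k : ℕ) (b b' : ℝ) (hb : 0 < b) (hb' : 0 < b') :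
    (b - b') ^ 2 / (8 * (max b b') ^ 2) ≤
      (1/2) * (∫ t in Set.Ioi (0:ℝ), (gNorm k b t - gNorm k b' t) ^ 2) ∧
    (1/2) * (∫ t in Set.Ioi (0:ℝ), (gNorm k b t - gNorm k b' t) ^ 2) ≤
      (k + 1) * (b - b') ^ 2 / (8 * (min b b') ^ 2) := by
  set G := Real.Gamma ((k:ℝ) + 1) with hGdef
  have hG : 0 < G := Real.Gamma_pos_of_pos (by positivity)
  have hsq : ∀ c : ℝ, (fun u => (gammaFun k c u) ^ 2) = fun u => gammaFun k c u * gammaFun k c u :=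
    fun c => funext fun u => sq (gammaFun k c u)
  have hIb : (∫ u in Set.Ioi (0:ℝ), (gammaFun k b u) ^ 2) = G / (2*b) ^ (k+1) := by
    rw [hsq b, integral_gammaFun_mul k hb hb, show b + b = 2*b by ring]
  have hIb' : (∫ u in Set.Ioi (0:ℝ), (gammaFun k b' u) ^ 2) = G / (2*b') ^ (k+1) := by
    rw [hsq b', integral_gammaFun_mul k hb' hb', show b' + b' = 2*b' by ring]
  have hIbb' : (∫ t in Set.Ioi (0:ℝ), gammaFun k b t * gammaFun k b' t)
      = G / (b + b') ^ (k+1) := integral_gammaFun_mul k hb hb'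
  set Nb := Real.sqrt (∫ u in Set.Ioi (0:ℝ), (gammaFun k b u) ^ 2) with hNbdef
  set Nb' := Real.sqrt (∫ u in Set.Ioi (0:ℝ), (gammaFun k b' u) ^ 2) with hNb'def
  have hIbpos : (0:ℝ) < G / (2*b) ^ (k+1) := by positivity
  have hIb'pos : (0:ℝ) < G / (2*b') ^ (k+1) := by positivity
  have hNb : 0 < Nb := by rw [hNbdef, hIb]; exact Real.sqrt_pos.mpr hIbpos
  have hNb' : 0 < Nb' := by rw [hNb'def, hIb']; exact Real.sqrt_pos.mpr hIb'pos
  have hNbsq : Nb ^ 2 = G / (2*b) ^ (k+1) := by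
    rw [hNbdef, hIb, Real.sq_sqrt hIbpos.le]
  have hNb'sq : Nb' ^ 2 = G / (2*b') ^ (k+1) := by
    rw [hNb'def, hIb', Real.sq_sqrt hIb'pos.le]
  have hexp : (fun t => (gNorm k b t - gNorm k b' t) ^ 2)
      = fun t => (Nb^2)⁻¹ * (gammaFun k b t * gammaFun k b t)
          + (-(2/(Nb*Nb'))) * (gammaFun k b t * gammaFun k b' t)
          + (Nb'^2)⁻¹ * (gammaFun k b' t * gammaFun k b' t) := by
    funext t
    unfold gNorm
    rw [← hNbdef, ← hNb'def]
    field_simp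
    ring
  have h1 := integrable_gammaFun_mul k hb hb
  have h2 := integrable_gammaFun_mul k hb hb'
  have h3 := integrable_gammaFun_mul k hb' hb'
  have i1 : Integrable (fun t => (Nb^2)⁻¹ * (gammaFun k b t * gammaFun k b t))
      (volume.restrict (Set.Ioi (0:ℝ))) := h1.const_mul _
  have i2 : Integrable (fun t => (-(2/(Nb*Nb'))) * (gammaFun k b t * gammaFun k b' t))
      (volume.restrict (Set.Ioi (0:ℝ))) := h2.const_mul _
  have i3 : Integrable (fun t => (Nb'^2)⁻¹ * (gammaFun k b' t * gammaFun k b' t))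
      (volume.restrict (Set.Ioi (0:ℝ))) := h3.const_mul _
  have i12 : Integrable (fun t => (Nb^2)⁻¹ * (gammaFun k b t * gammaFun k b t)
      + (-(2/(Nb*Nb'))) * (gammaFun k b t * gammaFun k b' t))
      (volume.restrict (Set.Ioi (0:ℝ))) := i1.add i2
  have hint : (∫ t in Set.Ioi (0:ℝ), (gNorm k b t - gNorm k b' t) ^ 2)
      = (Nb^2)⁻¹ * (G / (2*b) ^ (k+1)) + (-(2/(Nb*Nb'))) * (G / (b+b') ^ (k+1))
          + (Nb'^2)⁻¹ * (G / (2*b') ^ (k+1)) := by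
    rw [hexp, integral_add i12 i3, integral_add i1 i2,
      integral_const_mul, integral_const_mul, integral_const_mul,
      integral_gammaFun_mul k hb hb, integral_gammaFun_mul k hb hb',
      integral_gammaFun_mul k hb' hb', show b + b = 2*b by ring, show b' + b' = 2*b' by ring]
  set s := Real.sqrt (4*b*b') with hsdef
  have hs : 0 < s := Real.sqrt_pos.mpr (by positivity)
  have hssq : s ^ 2 = 4*b*b' := Real.sq_sqrt (by positivity)
  have hss : (s ^ (k+1)) ^ 2 = (4*b*b') ^ (k+1) := by
    rw [← pow_mul, mul_comm, pow_mul, hssq]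
  have hNN : Nb * Nb' = G / s ^ (k+1) := by
    rw [hNbdef, hNb'def, hIb, hIb', ← Real.sqrt_mul hIbpos.le]
    have key : G / (2*b) ^ (k+1) * (G / (2*b') ^ (k+1)) = (G / s ^ (k+1)) ^ 2 := by
      rw [div_pow, hss, div_mul_div_comm, ← mul_pow,
        show (2*b) * (2*b') = 4*b*b' by ring, ← pow_two]
    rw [key, Real.sqrt_sq (by positivity)]
  set z := s / (b + b') with hzdef
  have hz0 : 0 ≤ z := by positivity
  have hz1 : z ≤ 1 := by
    rw [hzdef, div_le_one (by positivity)]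
    have h := Real.sqrt_le_sqrt (show 4*b*b' ≤ (b+b')^2 by nlinarith [sq_nonneg (b - b')])
    rwa [Real.sqrt_sq (by positivity)] at h
  have hhalf : (1/2) * (∫ t in Set.Ioi (0:ℝ), (gNorm k b t - gNorm k b' t) ^ 2)
      = 1 - z ^ (k+1) := by
    rw [hint, hNbsq, hNb'sq, hNN, hzdef, div_pow]
    have hpow1 : (0:ℝ) < (2*b) ^ (k+1) := by positivity
    have hpow2 : (0:ℝ) < (2*b') ^ (k+1) := by positivity
    have hpow3 : (0:ℝ) < (b+b') ^ (k+1) := by positivity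
    have hpow4 : (0:ℝ) < s ^ (k+1) := by positivity
    field_simp
    ring
  constructor
  · rw [hhalf]; exact (bounds_aux hb hb' k).1
  · rw [hhalf]; exact (bounds_aux hb hb' k).2
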